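/- Let X be an Abelian group with orthogonality relation ⊥ satisfying: x ⊥ y implies x ⊥ -y, -x ⊥ y, 2x ⊥ 2y; and for every x there is y with x ⊥ y and x+y ⊥ x-y. Let Y be a complete β-homogeneous F-space (β > 0) and ε ≥ 0. If f : X → Y satisfies ‖f(x+y)-f(x)-f(y)‖ ≤ ε whenever x ⊥ y, then the pointwise limit g(x) = lim_n [((2^n+1)/(2·4^n))f(2^n x) - ((2^n-1)/(2·4^n))f(-2^n x)] exists and satisfies g(x+y) = g(x) + g(y) whenever x ⊥ y. -/

import Mathlib

set_option maxHeartbeats 1000000 in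
theorem stmt5 {X Y : Type*} [AddCommGroup X] [AddCommGroup Y] [Module ℝ Y]
    (perp : X → X → Prop)
    (hperp1 : ∀ x y, perp x y → perp x (-y) ∧ perp (-x) y ∧ perp (2 • x) (2 • y))
    (hperp2 : ∀ x : X, ∃ y : X, perp x y ∧ perp (x + y) (x - y))
    (β : ℝ) (hβ : 0 < β)
    (N : Y → ℝ)
    (hN0 : ∀ y : Y, N y = 0 ↔ y = 0)
    (htri : ∀ y z : Y, N (y + z) ≤ N y + N z)
    (hhom : ∀ (t : ℝ) (y : Y), N (t • y) = |t| ^ β * N y)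
    (hcomp : ∀ u : ℕ → Y,
      (∀ δ > (0 : ℝ), ∃ M : ℕ, ∀ m n, M ≤ m → M ≤ n → N (u m - u n) < δ) →
      ∃ l : Y, ∀ δ > (0 : ℝ), ∃ M : ℕ, ∀ n, M ≤ n → N (u n - l) < δ)
    (ε : ℝ) (hε : 0 ≤ ε)
    (f : X → Y)
    (hf : ∀ x y, perp x y → N (f (x + y) - f x - f y) ≤ ε) :
    ∃ g : X → Y,
      (∀ x : X, ∀ δ > (0 : ℝ), ∃ M : ℕ, ∀ n, M ≤ n →
        N ((((2 : ℝ) ^ n + 1) / (2 * (4 : ℝ) ^ n)) • f (2 ^ n • x)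
          - (((2 : ℝ) ^ n - 1) / (2 * (4 : ℝ) ^ n)) • f (-(2 ^ n • x)) - g x) < δ) ∧
      (∀ x y, perp x y → g (x + y) = g x + g y) := by
  classical
  -- basic facts about N
  have hN0' : N 0 = 0 := (hN0 0).2 rfl
  have hNneg : ∀ z : Y, N (-z) = N z := by
    intro z
    have h : ((-1 : ℝ)) • z = -z := by simp
    rw [← h, hhom]; simp
  have hNnonneg : ∀ z : Y, 0 ≤ N z := by
    intro z
    have h := htri z (-z)
    rw [add_neg_cancel, hN0', hNneg] at h
    linarith
  have hNsub : ∀ a b : Y, N (a - b) ≤ N a + N b := by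
    intro a b
    have := htri a (-b)
    rw [hNneg] at this
    simpa [sub_eq_add_neg] using this
  have hNsymm : ∀ a b : Y, N (a - b) = N (b - a) := by
    intro a b; rw [← hNneg, neg_sub]
  have htri3 : ∀ a b c : Y, N (a + b + c) ≤ N a + N b + N c := by
    intro a b c
    calc N (a + b + c) ≤ N (a + b) + N c := htri _ _
      _ ≤ N a + N b + N c := by have := htri a b; linarith
  have hperp_pow : ∀ (n : ℕ) (x y : X), perp x y → perp (2 ^ n • x) (2 ^ n • y) := by
    intro n
    induction n with
    | zero => intro x y h; simpa using h
    | succ n ih =>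
      intro x y h
      have h2 := (hperp1 _ _ (ih x y h)).2.2
      have e : ∀ z : X, (2 ^ (n + 1) : ℕ) • z = 2 • ((2 ^ n : ℕ) • z) := by
        intro z; rw [pow_succ, mul_comm, mul_smul]
      rw [e x, e y]; exact h2
  have hsp : ∀ (k : ℕ) (z : X), (2 ^ (k + 1) : ℕ) • z = 2 • ((2 ^ k : ℕ) • z) := by
    intro k z; rw [pow_succ, mul_comm, mul_smul]
  -- key approximate identities
  have keyA : ∀ x y : X, perp x y → perp (x + y) (x - y) →
      N (f (2 • x) - f x - f x - f y - f (-y)) ≤ 3 * ε := by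
    intro x y h hpm
    have h1 : N (f (x + y) - f x - f y) ≤ ε := hf _ _ h
    have h2 : N (f (x - y) - f x - f (-y)) ≤ ε := by
      have := hf x (-y) (hperp1 _ _ h).1
      rw [← sub_eq_add_neg] at this
      exact this
    have h3 : N (f (2 • x) - f (x + y) - f (x - y)) ≤ ε := by
      have := hf (x + y) (x - y) hpm
      have e : (x + y) + (x - y) = 2 • x := by abel
      rw [e] at this; exact this
    have e2 : f (2 • x) - f x - f x - f y - f (-y)
        = (f (2 • x) - f (x + y) - f (x - y)) + (f (x + y) - f x - f y)
          + (f (x - y) - f x - f (-y)) := by abel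
    rw [e2]
    calc N _ ≤ _ := htri3 _ _ _
      _ ≤ 3 * ε := by linarith
  have keyB : ∀ x y : X, perp x y → perp (x + y) (x - y) →
      N (f (2 • y) - f y - f y - f x - f (-x)) ≤ 3 * ε := by
    intro x y h hpm
    have h1 : N (f (x + y) - f x - f y) ≤ ε := hf _ _ h
    have h2 : N (f (-x + y) - f (-x) - f y) ≤ ε := hf (-x) y (hperp1 _ _ h).2.1
    have h3 : N (f (2 • y) - f (x + y) - f (-x + y)) ≤ ε := by
      have := hf (x + y) (-(x - y)) (hperp1 _ _ hpm).1
      have e1 : (x + y) + -(x - y) = 2 • y := by abel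
      have e2 : -(x - y) = -x + y := by abel
      rw [e1, e2] at this; exact this
    have e2 : f (2 • y) - f y - f y - f x - f (-x)
        = (f (2 • y) - f (x + y) - f (-x + y)) + (f (x + y) - f x - f y)
          + (f (-x + y) - f (-x) - f y) := by abel
    rw [e2]
    calc N _ ≤ _ := htri3 _ _ _
      _ ≤ 3 * ε := by linarith
  have hOdd : ∀ x : X, N (f (2 • x) - f (-(2 • x)) - (2 : ℝ) • (f x - f (-x))) ≤ 6 * ε := by
    intro x
    obtain ⟨y, hp, hpm⟩ := hperp2 x
    have A1 := keyA x y hp hpm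
    have hp' : perp (-x) (-y) := (hperp1 _ _ (hperp1 _ _ hp).1).2.1
    have hpm' : perp (-x + -y) (-x - -y) := by
      have := (hperp1 _ _ (hperp1 _ _ hpm).1).2.1
      have e1 : -x + -y = -(x + y) := by abel
      have e2 : -x - -y = -(x - y) := by abel
      rw [e1, e2]; exact this
    have A2 := keyA (-x) (-y) hp' hpm'
    rw [smul_neg, neg_neg] at A2
    have e : f (2 • x) - f (-(2 • x)) - (2 : ℝ) • (f x - f (-x))
        = (f (2 • x) - f x - f x - f y - f (-y))
          - (f (-(2 • x)) - f (-x) - f (-x) - f (-y) - f y) := by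
      rw [two_smul ℝ]; abel
    rw [e]
    calc N _ ≤ _ := hNsub _ _
      _ ≤ 6 * ε := by linarith
  have hE2 : ∀ x y : X, perp x y → perp (x + y) (x - y) →
      N (f (2 • x) + f (-(2 • x)) - f x - f x - f (-x) - f (-x)
        - f y - f y - f (-y) - f (-y)) ≤ 6 * ε := by
    intro x y hp hpm
    have A1 := keyA x y hp hpm
    have hp' : perp (-x) (-y) := (hperp1 _ _ (hperp1 _ _ hp).1).2.1
    have hpm' : perp (-x + -y) (-x - -y) := by
      have := (hperp1 _ _ (hperp1 _ _ hpm).1).2.1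
      have e1 : -x + -y = -(x + y) := by abel
      have e2 : -x - -y = -(x - y) := by abel
      rw [e1, e2]; exact this
    have A2 := keyA (-x) (-y) hp' hpm'
    rw [smul_neg, neg_neg] at A2
    have e : f (2 • x) + f (-(2 • x)) - f x - f x - f (-x) - f (-x)
        - f y - f y - f (-y) - f (-y)
        = (f (2 • x) - f x - f x - f y - f (-y))
          + (f (-(2 • x)) - f (-x) - f (-x) - f (-y) - f y) := by abel
    rw [e]
    calc N _ ≤ _ := htri _ _
      _ ≤ 6 * ε := by linarith
  have hE2' : ∀ x y : X, perp x y → perp (x + y) (x - y) →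
      N (f (2 • y) + f (-(2 • y)) - f y - f y - f (-y) - f (-y)
        - f x - f x - f (-x) - f (-x)) ≤ 6 * ε := by
    intro x y hp hpm
    have A1 := keyB x y hp hpm
    have hp' : perp (-x) (-y) := (hperp1 _ _ (hperp1 _ _ hp).1).2.1
    have hpm' : perp (-x + -y) (-x - -y) := by
      have := (hperp1 _ _ (hperp1 _ _ hpm).1).2.1
      have e1 : -x + -y = -(x + y) := by abel
      have e2 : -x - -y = -(x - y) := by abel
      rw [e1, e2]; exact this
    have A2 := keyB (-x) (-y) hp' hpm'
    rw [smul_neg, neg_neg] at A2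
    have e : f (2 • y) + f (-(2 • y)) - f y - f y - f (-y) - f (-y)
        - f x - f x - f (-x) - f (-x)
        = (f (2 • y) - f y - f y - f x - f (-x))
          + (f (-(2 • y)) - f (-y) - f (-y) - f (-x) - f x) := by abel
    rw [e]
    calc N _ ≤ _ := htri _ _
      _ ≤ 6 * ε := by linarith
  have hEsym : ∀ x y : X, perp x y → perp (x + y) (x - y) →
      N ((f (2 • x) + f (-(2 • x))) - (f (2 • y) + f (-(2 • y)))) ≤ 12 * ε := by
    intro x y hp hpm
    have B1 := hE2 x y hp hpm
    have B2 := hE2' x y hp hpm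
    have e : (f (2 • x) + f (-(2 • x))) - (f (2 • y) + f (-(2 • y)))
        = (f (2 • x) + f (-(2 • x)) - f x - f x - f (-x) - f (-x)
            - f y - f y - f (-y) - f (-y))
          - (f (2 • y) + f (-(2 • y)) - f y - f y - f (-y) - f (-y)
            - f x - f x - f (-x) - f (-x)) := by abel
    rw [e]
    calc N _ ≤ _ := hNsub _ _
      _ ≤ 12 * ε := by linarith
  have hQuad : ∀ x : X,
      N (f (2 • 2 • x) + f (-(2 • 2 • x)) - (4 : ℝ) • (f (2 • x) + f (-(2 • x)))) ≤ 30 * ε := by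
    intro x
    obtain ⟨y, hp, hpm⟩ := hperp2 x
    have hp2 : perp (2 • x) (2 • y) := (hperp1 _ _ hp).2.2
    have hpm2 : perp (2 • x + 2 • y) (2 • x - 2 • y) := by
      have := (hperp1 _ _ hpm).2.2
      rw [smul_add, smul_sub] at this
      exact this
    have B := hE2 (2 • x) (2 • y) hp2 hpm2
    have C := hEsym x y hp hpm
    have C' : N ((f (2 • y) + f (-(2 • y))) - (f (2 • x) + f (-(2 • x)))) ≤ 12 * ε := by
      rw [hNsymm]; exact C
    have e : f (2 • 2 • x) + f (-(2 • 2 • x)) - (4 : ℝ) • (f (2 • x) + f (-(2 • x)))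
        = (f (2 • 2 • x) + f (-(2 • 2 • x)) - f (2 • x) - f (2 • x) - f (-(2 • x)) - f (-(2 • x))
            - f (2 • y) - f (2 • y) - f (-(2 • y)) - f (-(2 • y)))
          + ((f (2 • y) + f (-(2 • y))) - (f (2 • x) + f (-(2 • x))))
          + ((f (2 • y) + f (-(2 • y))) - (f (2 • x) + f (-(2 • x)))) := by
      rw [show (4 : ℝ) = (1 + 1 + 1 + 1 : ℝ) by norm_num, add_smul, add_smul, add_smul, one_smul]
      abel
    rw [e]
    calc N _ ≤ _ := htri3 _ _ _
      _ ≤ 30 * ε := by linarith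
  have htri4 : ∀ a b c d : Y, N (a + b + c + d) ≤ N a + N b + N c + N d := by
    intro a b c d
    calc N (a + b + c + d) ≤ N (a + b + c) + N d := htri _ _
      _ ≤ N a + N b + N c + N d := by have := htri3 a b c; linarith
  -- the approximating sequence
  obtain ⟨u, hu_def⟩ : ∃ u : X → ℕ → Y, u = fun z n =>
      (((2 : ℝ) ^ n + 1) / (2 * (4 : ℝ) ^ n)) • f (2 ^ n • z)
        - (((2 : ℝ) ^ n - 1) / (2 * (4 : ℝ) ^ n)) • f (-(2 ^ n • z)) := ⟨_, rfl⟩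
  set r : ℝ := (1 / 2 : ℝ) ^ β with hr_def
  have hr0 : 0 < r := Real.rpow_pos_of_pos (by norm_num) β
  have hr1 : r < 1 := Real.rpow_lt_one (by norm_num) (by norm_num) hβ
  have hpow : ∀ n : ℕ, ((1 / 2 : ℝ) ^ n) ^ β = r ^ n := by
    intro n
    rw [← Real.rpow_natCast ((1 / 2 : ℝ)) n, ← Real.rpow_natCast r n, hr_def,
      ← Real.rpow_mul (by norm_num), ← Real.rpow_mul (by norm_num), mul_comm]
  have h4 : ∀ n : ℕ, (4 : ℝ) ^ n = 2 ^ n * 2 ^ n := by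
    intro n; rw [← mul_pow]; norm_num
  have hu : ∀ (z : X) (n : ℕ), u z n
      = (1 / (2 * 4 ^ n) : ℝ) • (f (2 ^ n • z) + f (-(2 ^ n • z)))
        + (1 / (2 * 2 ^ n) : ℝ) • (f (2 ^ n • z) - f (-(2 ^ n • z))) := by
    intro z n
    have h2n : (2 : ℝ) ^ n ≠ 0 := by positivity
    have ea : ((2 : ℝ) ^ n + 1) / (2 * (4 : ℝ) ^ n)
        = 1 / (2 * 4 ^ n) + 1 / (2 * 2 ^ n) := by
      rw [h4]; field_simp; ring
    have eb : ((2 : ℝ) ^ n - 1) / (2 * (4 : ℝ) ^ n)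
        = 1 / (2 * 2 ^ n) - 1 / (2 * 4 ^ n) := by
      rw [h4]; field_simp
    simp only [hu_def]
    rw [ea, eb, add_smul, sub_smul, smul_add, smul_sub]
    abel
  have hdiff : ∀ (z : X) (n : ℕ), 1 ≤ n → N (u z (n + 1) - u z n) ≤ 36 * ε * r ^ n := by
    intro z n hn
    have h4n : (4 : ℝ) ^ n ≠ 0 := by positivity
    have h2n : (2 : ℝ) ^ n ≠ 0 := by positivity
    have ec : (1 / (2 * (4 : ℝ) ^ (n + 1))) * 4 = 1 / (2 * 4 ^ n) := by
      rw [pow_succ]; field_simp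
    have ed : (1 / (2 * (2 : ℝ) ^ (n + 1))) * 2 = 1 / (2 * 2 ^ n) := by
      rw [pow_succ]; field_simp
    have e1 : u z (n + 1) - u z n
        = (1 / (2 * 4 ^ (n + 1)) : ℝ) •
            ((f (2 ^ (n + 1) • z) + f (-(2 ^ (n + 1) • z)))
              - (4 : ℝ) • (f (2 ^ n • z) + f (-(2 ^ n • z))))
          + (1 / (2 * 2 ^ (n + 1)) : ℝ) •
            ((f (2 ^ (n + 1) • z) - f (-(2 ^ (n + 1) • z)))
              - (2 : ℝ) • (f (2 ^ n • z) - f (-(2 ^ n • z)))) := by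
      conv_rhs => rw [smul_sub, smul_sub, smul_smul, smul_smul, ec, ed]
      rw [hu z (n + 1), hu z n]
      abel
    -- bounds on the scalars
    have hc_le : (1 / (2 * (4 : ℝ) ^ (n + 1))) ≤ (1 / 2) ^ n := by
      rw [one_div_pow]
      apply one_div_le_one_div_of_le (by positivity)
      calc (2 : ℝ) ^ n ≤ 4 ^ n := by gcongr <;> norm_num
        _ ≤ 2 * 4 ^ (n + 1) := by
            rw [pow_succ]
            nlinarith [pow_pos (show (0 : ℝ) < 4 by norm_num) n]
    have hd_le : (1 / (2 * (2 : ℝ) ^ (n + 1))) ≤ (1 / 2) ^ n := by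
      rw [one_div_pow]
      apply one_div_le_one_div_of_le (by positivity)
      rw [pow_succ]
      nlinarith [pow_pos (show (0 : ℝ) < 2 by norm_num) n]
    have hcβ : (1 / (2 * (4 : ℝ) ^ (n + 1))) ^ β ≤ r ^ n := by
      rw [← hpow n]; exact Real.rpow_le_rpow (by positivity) hc_le hβ.le
    have hdβ : (1 / (2 * (2 : ℝ) ^ (n + 1))) ^ β ≤ r ^ n := by
      rw [← hpow n]; exact Real.rpow_le_rpow (by positivity) hd_le hβ.le
    -- bound the E part via hQuad
    obtain ⟨m, rfl⟩ : ∃ m, n = m + 1 := ⟨n - 1, by omega⟩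
    have hEbound : N ((f (2 ^ (m + 1 + 1) • z) + f (-(2 ^ (m + 1 + 1) • z)))
        - (4 : ℝ) • (f (2 ^ (m + 1) • z) + f (-(2 ^ (m + 1) • z)))) ≤ 30 * ε := by
      rw [hsp (m + 1) z, hsp m z]
      exact hQuad (2 ^ m • z)
    have hObound : N ((f (2 ^ (m + 1 + 1) • z) - f (-(2 ^ (m + 1 + 1) • z)))
        - (2 : ℝ) • (f (2 ^ (m + 1) • z) - f (-(2 ^ (m + 1) • z)))) ≤ 6 * ε := by
      rw [hsp (m + 1) z]
      exact hOdd (2 ^ (m + 1) • z)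
    rw [e1]
    have hNc : N ((1 / (2 * 4 ^ (m + 1 + 1)) : ℝ) •
        ((f (2 ^ (m + 1 + 1) • z) + f (-(2 ^ (m + 1 + 1) • z)))
          - (4 : ℝ) • (f (2 ^ (m + 1) • z) + f (-(2 ^ (m + 1) • z)))))
        ≤ r ^ (m + 1) * (30 * ε) := by
      rw [hhom, abs_of_nonneg (by positivity)]
      exact mul_le_mul hcβ hEbound (hNnonneg _) (by positivity)
    have hNd : N ((1 / (2 * 2 ^ (m + 1 + 1)) : ℝ) •
        ((f (2 ^ (m + 1 + 1) • z) - f (-(2 ^ (m + 1 + 1) • z)))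
          - (2 : ℝ) • (f (2 ^ (m + 1) • z) - f (-(2 ^ (m + 1) • z)))))
        ≤ r ^ (m + 1) * (6 * ε) := by
      rw [hhom, abs_of_nonneg (by positivity)]
      exact mul_le_mul hdβ hObound (hNnonneg _) (by positivity)
    calc N _ ≤ _ := htri _ _
      _ ≤ r ^ (m + 1) * (30 * ε) + r ^ (m + 1) * (6 * ε) := by linarith
      _ = 36 * ε * r ^ (m + 1) := by ring
  -- telescoping: Cauchy estimate
  set K : ℝ := 36 * ε / (1 - r) with hK_def
  have hK0 : 0 ≤ K := by
    apply div_nonneg (by linarith) (by linarith)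
  have hKr : K * (1 - r) = 36 * ε := by
    rw [hK_def]; exact div_mul_cancel₀ _ (ne_of_gt (by linarith : (0 : ℝ) < 1 - r))
  have htel : ∀ (z : X) (m n : ℕ), 1 ≤ n →
      N (u z (n + m) - u z n) ≤ K * r ^ n - K * r ^ (n + m) := by
    intro z m
    induction m with
    | zero =>
      intro n hn
      simp only [Nat.add_zero, sub_self, hN0']
      linarith
    | succ m ih =>
      intro n hn
      have h1 := ih n hn
      have h2 := hdiff z (n + m) (by omega)
      have e : u z (n + (m + 1)) - u z n
          = (u z ((n + m) + 1) - u z (n + m)) + (u z (n + m) - u z n) := by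
        have : n + (m + 1) = (n + m) + 1 := by omega
        rw [this]; abel
      rw [e]
      have hstep : 36 * ε * r ^ (n + m) = K * r ^ (n + m) - K * r ^ (n + m + 1) := by
        rw [pow_succ]
        linear_combination (r ^ (n + m)) * hKr.symm
      calc N _ ≤ _ := htri _ _
        _ ≤ 36 * ε * r ^ (n + m) + (K * r ^ n - K * r ^ (n + m)) := by linarith
        _ = K * r ^ n - K * r ^ (n + (m + 1)) := by
            rw [hstep, show n + (m + 1) = n + m + 1 from by omega]; ring
  -- convergence
  have hconv : ∀ z : X, ∃ l : Y, ∀ δ > (0 : ℝ), ∃ M : ℕ, ∀ n, M ≤ n → N (u z n - l) < δ := by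
    intro z
    apply hcomp
    intro δ hδ
    obtain ⟨M₀, hM₀⟩ : ∃ M₀ : ℕ, r ^ M₀ < δ / (K + 1) :=
      exists_pow_lt_of_lt_one (by positivity) hr1
    refine ⟨max M₀ 1, ?_⟩
    have hbound : ∀ m n : ℕ, max M₀ 1 ≤ n → n ≤ m → N (u z m - u z n) < δ := by
      intro m n hn hnm
      obtain ⟨k, rfl⟩ : ∃ k, m = n + k := ⟨m - n, by omega⟩
      have h1 := htel z k n (le_trans (le_max_right _ _) hn)
      have h2 : K * r ^ (n + k) ≥ 0 := by positivity
      have h3 : r ^ n ≤ r ^ M₀ :=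
        pow_le_pow_of_le_one hr0.le hr1.le (le_trans (le_max_left _ _) hn)
      have h4 : K * r ^ n ≤ K * r ^ M₀ := mul_le_mul_of_nonneg_left h3 hK0
      have h5 : K * r ^ M₀ ≤ (K + 1) * r ^ M₀ := by
        have := pow_pos hr0 M₀
        nlinarith
      have h6 : (K + 1) * r ^ M₀ < δ := by
        rw [← lt_div_iff₀' (by positivity)]
        exact hM₀
      linarith
    intro m n hm hn
    rcases le_total n m with h | h
    · exact hbound m n hn h
    · rw [hNsymm]; exact hbound n m hm h
  choose g hg using hconv
  refine ⟨g, ?_, ?_⟩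
  · intro x δ hδ
    obtain ⟨M, hM⟩ := hg x δ hδ
    exact ⟨M, fun n hn => by simpa [hu_def] using hM n hn⟩
  · intro x y hxy
    set G : Y := g (x + y) - g x - g y with hG_def
    have key : ∀ δ > (0 : ℝ), N G < δ := by
      intro δ hδ
      obtain ⟨M₁, h1⟩ := hg (x + y) (δ / 4) (by linarith)
      obtain ⟨M₂, h2⟩ := hg x (δ / 4) (by linarith)
      obtain ⟨M₃, h3⟩ := hg y (δ / 4) (by linarith)
      obtain ⟨M₀, hM₀⟩ : ∃ M₀ : ℕ, r ^ M₀ < (δ / 4) / (2 * ε + 1) :=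
        exists_pow_lt_of_lt_one (by positivity) hr1
      set n : ℕ := max (max M₁ M₂) (max M₃ M₀) with hn_def
      -- middle bound
      have hperpn : perp (2 ^ n • x) (2 ^ n • y) := hperp_pow n x y hxy
      have hperpn' : perp (-(2 ^ n • x)) (-(2 ^ n • y)) :=
        (hperp1 _ _ (hperp1 _ _ hperpn).1).2.1
      have hfp : N (f (2 ^ n • (x + y)) - f (2 ^ n • x) - f (2 ^ n • y)) ≤ ε := by
        have := hf _ _ hperpn
        rw [← smul_add] at this
        exact this
      have hfm : N (f (-(2 ^ n • (x + y))) - f (-(2 ^ n • x)) - f (-(2 ^ n • y))) ≤ ε := by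
        have := hf _ _ hperpn'
        have e : -((2 ^ n : ℕ) • x) + -((2 ^ n : ℕ) • y) = -((2 ^ n : ℕ) • (x + y)) := by
          rw [smul_add]; abel
        rw [e] at this
        exact this
      have emid : u (x + y) n - u x n - u y n
          = (((2 : ℝ) ^ n + 1) / (2 * (4 : ℝ) ^ n)) •
              (f (2 ^ n • (x + y)) - f (2 ^ n • x) - f (2 ^ n • y))
            - (((2 : ℝ) ^ n - 1) / (2 * (4 : ℝ) ^ n)) •
              (f (-(2 ^ n • (x + y))) - f (-(2 ^ n • x)) - f (-(2 ^ n • y))) := by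
        rw [hu_def]
        simp only []
        rw [smul_sub, smul_sub, smul_sub, smul_sub]
        abel
      have h1pow : (1 : ℝ) ≤ 2 ^ n := one_le_pow₀ (by norm_num)
      have ha_nonneg : (0 : ℝ) ≤ ((2 : ℝ) ^ n + 1) / (2 * (4 : ℝ) ^ n) := by positivity
      have hb_nonneg : (0 : ℝ) ≤ ((2 : ℝ) ^ n - 1) / (2 * (4 : ℝ) ^ n) := by
        apply div_nonneg _ (by positivity)
        linarith
      have ha_le : ((2 : ℝ) ^ n + 1) / (2 * (4 : ℝ) ^ n) ≤ (1 / 2) ^ n := by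
        rw [one_div_pow, h4, div_le_div_iff₀ (by positivity) (by positivity)]
        nlinarith [mul_le_mul_of_nonneg_left h1pow
          (by positivity : (0 : ℝ) ≤ (2 : ℝ) ^ n)]
      have hb_le : ((2 : ℝ) ^ n - 1) / (2 * (4 : ℝ) ^ n) ≤ (1 / 2) ^ n := by
        refine le_trans ?_ ha_le
        gcongr
        linarith
      have haβ : (((2 : ℝ) ^ n + 1) / (2 * (4 : ℝ) ^ n)) ^ β ≤ r ^ n := by
        rw [← hpow n]; exact Real.rpow_le_rpow ha_nonneg ha_le hβ.le
      have hbβ : (((2 : ℝ) ^ n - 1) / (2 * (4 : ℝ) ^ n)) ^ β ≤ r ^ n := by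
        rw [← hpow n]; exact Real.rpow_le_rpow hb_nonneg hb_le hβ.le
      have hmid : N (u (x + y) n - u x n - u y n) ≤ 2 * ε * r ^ n := by
        rw [emid]
        have hA : N ((((2 : ℝ) ^ n + 1) / (2 * (4 : ℝ) ^ n)) •
            (f (2 ^ n • (x + y)) - f (2 ^ n • x) - f (2 ^ n • y))) ≤ r ^ n * ε := by
          rw [hhom, abs_of_nonneg ha_nonneg]
          exact mul_le_mul haβ hfp (hNnonneg _) (by positivity)
        have hB : N ((((2 : ℝ) ^ n - 1) / (2 * (4 : ℝ) ^ n)) •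
            (f (-(2 ^ n • (x + y))) - f (-(2 ^ n • x)) - f (-(2 ^ n • y)))) ≤ r ^ n * ε := by
          rw [hhom, abs_of_nonneg hb_nonneg]
          exact mul_le_mul hbβ hfm (hNnonneg _) (by positivity)
        calc N _ ≤ _ := hNsub _ _
          _ ≤ r ^ n * ε + r ^ n * ε := by linarith
          _ = 2 * ε * r ^ n := by ring
      have hn1 : M₁ ≤ n := le_trans (le_max_left _ _) (le_max_left _ _)
      have hn2 : M₂ ≤ n := le_trans (le_max_right _ _) (le_max_left _ _)
      have hn3 : M₃ ≤ n := le_trans (le_max_left _ _) (le_max_right _ _)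
      have hn0 : M₀ ≤ n := le_trans (le_max_right _ _) (le_max_right _ _)
      have hmid' : N (u (x + y) n - u x n - u y n) < δ / 4 := by
        have hrn : r ^ n ≤ r ^ M₀ := pow_le_pow_of_le_one hr0.le hr1.le hn0
        have hlt : (2 * ε + 1) * r ^ M₀ < δ / 4 := by
          rw [← lt_div_iff₀' (by positivity)]
          exact hM₀
        have hmul : 2 * ε * r ^ n ≤ 2 * ε * r ^ M₀ :=
          mul_le_mul_of_nonneg_left hrn (by linarith)
        have hp0 : 0 < r ^ M₀ := pow_pos hr0 M₀
        linarith
      have eG : G = (g (x + y) - u (x + y) n) + (u (x + y) n - u x n - u y n)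
          + (u x n - g x) + (u y n - g y) := by rw [hG_def]; abel
      rw [eG]
      have t1 : N (g (x + y) - u (x + y) n) < δ / 4 := by rw [hNsymm]; exact h1 n hn1
      have t3 : N (u x n - g x) < δ / 4 := h2 n hn2
      have t4 : N (u y n - g y) < δ / 4 := h3 n hn3
      calc N _ ≤ _ := htri4 _ _ _ _
        _ < δ := by linarith
    have hG0 : N G = 0 := by
      rcases (hNnonneg G).lt_or_eq with h | h
      · exact absurd (key _ h) (lt_irrefl _)
      · exact h.symm
    have hGz : G = 0 := (hN0 G).1 hG0
    rw [hG_def, sub_sub] at hGz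
    exact (sub_eq_zero.mp hGz)
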